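/- Fix r ≥ 2. Let φ be a satisfiable instance of 2-Clause 3-SAT and let G(φ) be the graph with one clause vertex u_i per clause, adjacent literal-pair vertices v_j, v'_j per variable, an (r−1)-subdivided edge from u_i to each literal vertex whose literal occurs in c_i, a 7-clique w_1,…,w_7, edges from each u_i to w_1,…,w_4 (plus w_5 if c_i has only 2 literals), edges from each v_j to w_2, w_3, w_4, and edges from each v'_j to w_5, w_6, w_7. Then col_r(G(φ)) ≤ 6. -/

import Mathlib

open SimpleGraph

variable {V : Type*}

/-- The strict order relation of a linear order. -/
def olt (σ : LinearOrder V) (a b : V) : Prop := σ.lt a b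

/-- The set of vertices `r`-reachable from `u` with respect to `σ`:
vertices `v >_σ u` joined to `u` by a path of length at most `r`
whose internal vertices all precede `u` in `σ`. -/
def reachSet (G : SimpleGraph V) (σ : LinearOrder V) (r : ℕ) (u : V) : Set V :=
  {v | olt σ u v ∧ ∃ p : G.Walk u v, p.IsPath ∧ p.length ≤ r ∧
    ∀ w ∈ p.support, w ≠ u → w ≠ v → olt σ w u}

/-- The set of vertices weakly `r`-reachable from `u` with respect to `σ`:
vertices `v >_σ u` joined to `u` by a path of length at most `r`
whose internal vertices all precede `v` in `σ`. -/
def wreachSet (G : SimpleGraph V) (σ : LinearOrder V) (r : ℕ) (u : V) : Set V :=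
  {v | olt σ u v ∧ ∃ p : G.Walk u v, p.IsPath ∧ p.length ≤ r ∧
    ∀ w ∈ p.support, w ≠ u → w ≠ v → olt σ w v}

/-- `col_r(G_σ)`: the maximum `r`-reach over all vertices. -/
noncomputable def colOrd [Fintype V] (G : SimpleGraph V) (σ : LinearOrder V) (r : ℕ) : ℕ :=
  Finset.univ.sup fun u => (reachSet G σ r u).ncard

/-- `wcol_r(G_σ)`: the maximum weak `r`-reach over all vertices. -/
noncomputable def wcolOrd [Fintype V] (G : SimpleGraph V) (σ : LinearOrder V) (r : ℕ) : ℕ :=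
  Finset.univ.sup fun u => (wreachSet G σ r u).ncard

/-- The `r`-coloring number of `G`. -/
noncomputable def colNum [Fintype V] (G : SimpleGraph V) (r : ℕ) : ℕ :=
  ⨅ σ : LinearOrder V, colOrd G σ r

/-- The weak `r`-coloring number of `G`. -/
noncomputable def wcolNum [Fintype V] (G : SimpleGraph V) (r : ℕ) : ℕ :=
  ⨅ σ : LinearOrder V, wcolOrd G σ r

/-- `p` is an `r`-qualifying path from `u` with respect to the (possibly partial)
order `lt`: a path of length at most `r` ending at a vertex `v` with `v ≠ u`,
`v` not `<` `u`, all of whose internal vertices are `< u`. -/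
def IsQual (G : SimpleGraph V) (lt : V → V → Prop) (r : ℕ) {u v : V} (p : G.Walk u v) : Prop :=
  p.IsPath ∧ p.length ≤ r ∧ v ≠ u ∧ ¬ lt v u ∧ ∀ w ∈ p.support, w ≠ u → w ≠ v → lt w u

/-- The `r`-backconnectivity of `u`: the maximum number of `r`-qualifying paths from `u`
that are pairwise vertex-disjoint apart from `u`. -/
noncomputable def bcon (G : SimpleGraph V) (lt : V → V → Prop) (r : ℕ) (u : V) : ℕ :=
  sSup {n | ∃ f : Fin n → (v : V) × G.Walk u v,
    (∀ i, IsQual G lt r (f i).2) ∧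
    ∀ i j : Fin n, i ≠ j → ∀ w, w ∈ (f i).2.support → w ∈ (f j).2.support → w = u}

/-- A shortest `r`-qualifying path: an `r`-qualifying `u`–`v` path of length `ℓ` such that
there is no `(ℓ-1)`-qualifying `u`–`v` path. -/
def IsShortQual (G : SimpleGraph V) (lt : V → V → Prop) (r : ℕ) {u v : V} (p : G.Walk u v) :
    Prop :=
  IsQual G lt r p ∧ ¬ ∃ q : G.Walk u v, IsQual G lt (p.length - 1) q

/-- The estimated `r`-backconnectivity of `u`: the maximum number of shortest
`r`-qualifying paths from `u` that are pairwise vertex-disjoint apart from `u`. -/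
noncomputable def est (G : SimpleGraph V) (lt : V → V → Prop) (r : ℕ) (u : V) : ℕ :=
  sSup {n | ∃ f : Fin n → (v : V) × G.Walk u v,
    (∀ i, IsShortQual G lt r (f i).2) ∧
    ∀ i j : Fin n, i ≠ j → ∀ w, w ∈ (f i).2.support → w ∈ (f j).2.support → w = u}

/-- The `r`-admissibility of `G`. -/
noncomputable def admNum [Fintype V] (G : SimpleGraph V) (r : ℕ) : ℕ :=
  ⨅ σ : LinearOrder V, Finset.univ.sup fun u => bcon G (olt σ) r u

/-- `d_v(u, G_σ)`: the least `i` such that `v` is `i`-reachable from `u`. -/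
noncomputable def dval (G : SimpleGraph V) (σ : LinearOrder V) (u v : V) : ℕ :=
  sInf {i | v ∈ reachSet G σ i u}


/-- An instance of 2-Clause 3-SAT: a CNF formula where every clause has at most 3
(distinct) variables, no clause repeats a variable, every clause has at least 2 literals
(single-literal clauses are assumed preprocessed), and each literal (a variable together
with a polarity) appears in exactly 2 clauses. -/
structure TC3SAT where
  n : ℕ
  m : ℕ
  clauses : Fin m → Finset (Fin n × Bool)
  vars_distinct : ∀ i, ∀ l ∈ clauses i, ∀ l' ∈ clauses i, l.1 = l'.1 → l = l'
  clause_le_three : ∀ i, (clauses i).card ≤ 3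
  clause_ge_two : ∀ i, 2 ≤ (clauses i).card
  lit_twice : ∀ l : Fin n × Bool, (Finset.univ.filter fun i => l ∈ clauses i).card = 2

/-- The assignment `A` satisfies the formula `φ`. -/
def TC3SAT.Sat (φ : TC3SAT) (A : Fin φ.n → Bool) : Prop :=
  ∀ i, ∃ l ∈ φ.clauses i, A l.1 = l.2

/-- The formula `φ` is satisfiable. -/
def TC3SAT.Satisfiable (φ : TC3SAT) : Prop := ∃ A, φ.Sat A

/-- Vertices of the `r`-coloring-number reduction graph `G(φ)`: one clause vertex `u i`
per clause, a pair of literal vertices per variable (`v j true` is `v_j`, `v j false` is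
`v'_j`), seven clique vertices `w 0, …, w 6` (representing `w_1, …, w_7`), and for each
occurrence `occ` of a literal in a clause, the `r - 1` internal vertices `s occ t` of the
`(r-1)`-subdivided edge between the clause vertex and the literal vertex. -/
inductive VtxC (r : ℕ) (φ : TC3SAT) where
  | u (i : Fin φ.m)
  | v (j : Fin φ.n) (b : Bool)
  | w (t : Fin 7)
  | s (occ : Σ i : Fin φ.m, {l : Fin φ.n × Bool // l ∈ φ.clauses i}) (t : Fin (r - 1))
  deriving DecidableEq, Fintype

/-- Base relation of the reduction graph: the subdivided edges are realized as paths
`u — s 0 — ⋯ — s (r-2) — v`; `w 0, …, w 6` form a clique; each clause vertex is joined to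
`w 0, …, w 3` (and to `w 4` if its clause has only 2 literals); each positive literal
vertex `v_j` is joined to `w 1, w 2, w 3` and each negative literal vertex `v'_j` to
`w 4, w 5, w 6`. -/
def relC (r : ℕ) (φ : TC3SAT) : VtxC r φ → VtxC r φ → Prop
  | .u i, .s occ t => occ.1 = i ∧ (t : ℕ) = 0
  | .s occ t, .s occ' t' => occ = occ' ∧ (t' : ℕ) = (t : ℕ) + 1
  | .s occ t, .v j b => occ.2.1 = (j, b) ∧ (t : ℕ) + 1 = r - 1
  | .v j _, .v j' _ => j = j'
  | .w _, .w _ => True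
  | .u i, .w t => (t : ℕ) ≤ 3 ∨ ((t : ℕ) = 4 ∧ (φ.clauses i).card = 2)
  | .v _ b, .w t =>
      (b = true ∧ 1 ≤ (t : ℕ) ∧ (t : ℕ) ≤ 3) ∨ (b = false ∧ 4 ≤ (t : ℕ) ∧ (t : ℕ) ≤ 6)
  | _, _ => False

/-- The reduction graph `G(φ)` for the `r`-coloring number. -/
def GC (r : ℕ) (φ : TC3SAT) : SimpleGraph (VtxC r φ) := SimpleGraph.fromRel (relC r φ)

section Aux

variable {r : ℕ} {φ : TC3SAT}

/-- Occurrence type. -/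
abbrev OccT (φ : TC3SAT) := Σ i : Fin φ.m, {l : Fin φ.n × Bool // l ∈ φ.clauses i}

/-- The literal vertex of an occurrence. -/
def vO (occ : OccT φ) : VtxC r φ := .v occ.2.1.1 occ.2.1.2

lemma adj_u {i : Fin φ.m} {y : VtxC r φ} (h : (GC r φ).Adj (.u i) y) :
    (∃ (occ : OccT φ) (t' : Fin (r-1)), occ.1 = i ∧ y = .s occ t' ∧ t'.1 = 0) ∨
    (∃ t : Fin 7, y = .w t ∧ (t.1 ≤ 3 ∨ (t.1 = 4 ∧ (φ.clauses i).card = 2))) := by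
  rw [GC, SimpleGraph.fromRel_adj] at h
  obtain ⟨hne, h | h⟩ := h <;> cases y <;> simp only [relC] at h <;> try exact h.elim
  · exact Or.inr ⟨_, rfl, h⟩
  · exact Or.inl ⟨_, _, h.1, rfl, h.2⟩

lemma adj_s {occ : OccT φ} {t : Fin (r-1)} {y : VtxC r φ}
    (h : (GC r φ).Adj (.s occ t) y) :
    (y = .u occ.1 ∧ t.1 = 0) ∨
    (∃ t' : Fin (r-1), y = .s occ t' ∧ (t'.1 = t.1 + 1 ∨ t.1 = t'.1 + 1)) ∨
    (y = vO occ ∧ t.1 + 1 = r - 1) := by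
  rw [GC, SimpleGraph.fromRel_adj] at h
  obtain ⟨hne, h | h⟩ := h <;> cases y <;> simp only [relC] at h
  · -- relC (s occ t) (v j b)
    obtain ⟨h1, h2⟩ := h
    refine Or.inr (Or.inr ⟨?_, h2⟩)
    rw [vO, h1]
  · -- relC (s occ t) (s occ' t')
    obtain ⟨h1, h2⟩ := h
    subst h1
    exact Or.inr (Or.inl ⟨_, rfl, Or.inl h2⟩)
  · -- relC (u i) (s occ t)
    exact Or.inl ⟨by rw [h.1], h.2⟩
  · -- relC (s occ' t') (s occ t)
    obtain ⟨h1, h2⟩ := h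
    subst h1
    exact Or.inr (Or.inl ⟨_, rfl, Or.inr h2⟩)

lemma adj_v {j : Fin φ.n} {b : Bool} {y : VtxC r φ} (h : (GC r φ).Adj (.v j b) y) :
    (y = .v j (!b)) ∨
    (∃ t : Fin 7, y = .w t) ∨
    (∃ (occ : OccT φ) (t' : Fin (r-1)), occ.2.1 = (j, b) ∧ y = .s occ t' ∧ t'.1 + 1 = r - 1) := by
  rw [GC, SimpleGraph.fromRel_adj] at h
  obtain ⟨hne, h | h⟩ := h <;> cases y <;> simp only [relC] at h <;> try exact h.elim
  case v j' b' =>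
    obtain rfl := h
    left
    have : b' ≠ b := fun hb => hne (by rw [hb])
    cases b <;> cases b' <;> simp_all
  case w => exact Or.inr (Or.inl ⟨_, rfl⟩)
  case v j' b' =>
    obtain rfl := h
    left
    have : b' ≠ b := fun hb => hne (by rw [hb])
    cases b <;> cases b' <;> simp_all
  case s occ t =>
    exact Or.inr (Or.inr ⟨occ, t, h.1, rfl, h.2⟩)

lemma adj_v_w {j : Fin φ.n} {b : Bool} {t : Fin 7} (h : (GC r φ).Adj (.v j b) (.w t)) :
    (b = true ∧ 1 ≤ t.1 ∧ t.1 ≤ 3) ∨ (b = false ∧ 4 ≤ t.1 ∧ t.1 ≤ 6) := by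
  rw [GC, SimpleGraph.fromRel_adj] at h
  obtain ⟨hne, h | h⟩ := h <;> simp only [relC] at h
  exact h

lemma adj_u_w {i : Fin φ.m} {t : Fin 7} (h : (GC r φ).Adj (.u i) (.w t)) :
    t.1 ≤ 3 ∨ (t.1 = 4 ∧ (φ.clauses i).card = 2) := by
  rw [GC, SimpleGraph.fromRel_adj] at h
  obtain ⟨hne, h | h⟩ := h <;> simp only [relC] at h
  exact h

end Aux
section Ord

variable {r : ℕ} {φ : TC3SAT}

/-- Level of a vertex with respect to an assignment. -/
def lev (A : Fin φ.n → Bool) : VtxC r φ → ℕ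
  | .s _ _ => 0
  | .v j b => if A j = b then 1 else 3
  | .u _ => 2
  | .w _ => 4

/-- Subdivision index of a vertex. -/
def tp : VtxC r φ → ℕ
  | .s _ t => t.1
  | _ => 0

/-- An arbitrary injective code. -/
noncomputable def cde : VtxC r φ → ℕ := fun x => ((Fintype.equivFin (VtxC r φ)) x : ℕ)

lemma cde_inj : Function.Injective (cde (r := r) (φ := φ)) := fun a b h => by
  have := (Fintype.equivFin (VtxC r φ)).injective (Fin.ext h)
  exact this

/-- The key of a vertex. -/
noncomputable def key (A : Fin φ.n → Bool) : VtxC r φ → ℕ ×ₗ (ℕ ×ₗ ℕ) :=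
  fun x => toLex (lev A x, toLex (tp x, cde x))

lemma key_inj (A : Fin φ.n → Bool) : Function.Injective (key (r := r) (φ := φ) A) := by
  intro a b h
  apply cde_inj
  have := congrArg (fun p => (ofLex (ofLex p).2).2) h
  exact this

/-- The linear order used to witness `col_r ≤ 6`. -/
noncomputable def σA (r : ℕ) (φ : TC3SAT) (A : Fin φ.n → Bool) : LinearOrder (VtxC r φ) :=
  LinearOrder.lift' (key A) (key_inj A)

lemma olt_iff {A : Fin φ.n → Bool} {a b : VtxC r φ} :
    olt (σA r φ A) a b ↔
      lev A a < lev A b ∨ (lev A a = lev A b ∧ (tp a < tp b ∨ (tp a = tp b ∧ cde a < cde b))) := by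
  show key A a < key A b ↔ _
  rw [key, key, Prod.Lex.lt_iff, Prod.Lex.lt_iff]
  exact Iff.rfl

lemma olt_lev_le {A : Fin φ.n → Bool} {a b : VtxC r φ} (h : olt (σA r φ A) a b) :
    lev A a ≤ lev A b := by
  rcases olt_iff.1 h with h | ⟨h, _⟩ <;> omega

lemma olt_s_s {A : Fin φ.n → Bool} {occ : OccT φ} {k t : Fin (r-1)}
    (h : olt (σA r φ A) (.s occ k) (.s occ t)) : k.1 < t.1 := by
  rcases olt_iff.1 h with h | ⟨_, h | ⟨h, hc⟩⟩
  · simp [lev] at h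
  · exact h
  · exfalso
    have : (VtxC.s occ k : VtxC r φ) = .s occ t := by
      congr 1
      exact Fin.ext h
    rw [this] at hc
    omega

lemma lev_eq_zero {A : Fin φ.n → Bool} {x : VtxC r φ} (h : lev A x = 0) :
    ∃ occ t, x = .s occ t := by
  cases x <;> simp [lev] at h <;> first | exact ⟨_, _, rfl⟩ | (split at h <;> omega)

lemma not_w_of_olt {A : Fin φ.n → Bool} {x a : VtxC r φ} (hla : lev A a ≤ 3)
    (h : olt (σA r φ A) x a) : ∀ t : Fin 7, x ≠ .w t := by
  intro t hx
  subst hx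
  have h1 := olt_lev_le h
  have h2 : lev A (VtxC.w t : VtxC r φ) = 4 := rfl
  omega

end Ord
section Master

open SimpleGraph.Walk

variable {r : ℕ} {φ : TC3SAT}

/-- Endpoint/length classification for paths in `GC` with no internal clique vertex. -/
def Conc (r : ℕ) (φ : TC3SAT) :
    VtxC r φ → VtxC r φ → List (VtxC r φ) → ℕ → Prop
  | .w _, _, _, _ => True
  | .u i, z, _, l =>
      z = .u i ∨
      (∃ (occ : OccT φ) (t' : Fin (r-1)), z = .s occ t' ∧ t'.1 + 1 ≤ l) ∨
      (∃ occ : OccT φ, occ.1 = i ∧ z = vO occ ∧ r ≤ l) ∨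
      ((∃ t : Fin 7, z = .w t) ∧ (GC r φ).Adj (.u i) z) ∨
      (r + 1 ≤ l)
  | .s occ t, z, sup, l =>
      (∃ t' : Fin (r-1), z = .s occ t' ∧ t.1 - t'.1 ≤ l ∧ t'.1 - t.1 ≤ l) ∨
      (z = .u occ.1 ∧ t.1 + 1 ≤ l) ∨
      (z = vO occ ∧ r - 1 - t.1 ≤ l) ∨
      ((.u occ.1 : VtxC r φ) ∈ sup ∧ (.u occ.1 : VtxC r φ) ≠ z ∧ t.1 + 2 ≤ l) ∨
      (vO occ ∈ sup ∧ vO occ ≠ z ∧ r - t.1 ≤ l)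
  | .v j b, z, sup, l =>
      z = .v j b ∨
      (z = .v j !b ∧ 1 ≤ l) ∨
      ((∃ t : Fin 7, z = .w t) ∧ (GC r φ).Adj (.v j b) z) ∨
      (∃ (occ : OccT φ) (t' : Fin (r-1)), occ.2.1 = (j, b) ∧ z = .s occ t' ∧ r - 1 - t'.1 ≤ l) ∨
      (∃ occ : OccT φ, occ.2.1 = (j, b) ∧ z = .u occ.1 ∧ r ≤ l) ∨
      ((.v j !b : VtxC r φ) ∈ sup ∧ (.v j !b : VtxC r φ) ≠ z ∧ 2 ≤ l ∧
        (((∃ t : Fin 7, z = .w t) ∧ (GC r φ).Adj (.v j !b) z) ∨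
         (∃ (occ : OccT φ) (t' : Fin (r-1)), occ.2.1 = (j, !b) ∧ z = .s occ t') ∨
         (∃ occ : OccT φ, occ.2.1 = (j, !b) ∧ z = .u occ.1 ∧ r + 1 ≤ l) ∨
         (r + 2 ≤ l))) ∨
      (r + 1 ≤ l)

lemma master : ∀ {a z : VtxC r φ} (p : (GC r φ).Walk a z), p.IsPath →
    (∀ x ∈ p.support, x ≠ a → x ≠ z → ∀ t : Fin 7, x ≠ .w t) →
    Conc r φ a z p.support p.length := by
  intro a z p
  induction p with
  | nil =>
    intro _ _
    rename_i a _ _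
    cases a with
    | u i => exact Or.inl rfl
    | v j b => exact Or.inl rfl
    | w t => trivial
    | s occ t => exact Or.inl ⟨t, rfl, by omega⟩
  | @cons a y z h q ih =>
    intro hp H
    rw [SimpleGraph.Walk.cons_isPath_iff] at hp
    obtain ⟨hq, hans⟩ := hp
    have hzq : z ∈ q.support := q.end_mem_support
    have hza : z ≠ a := fun he => hans (he ▸ hzq)
    have hyq : y ∈ q.support := q.start_mem_support
    have hsup : ∀ x ∈ q.support, x ∈ (SimpleGraph.Walk.cons h q).support := by
      intro x hx
      rw [SimpleGraph.Walk.support_cons]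
      exact List.mem_cons_of_mem _ hx
    have hH' : ∀ x ∈ q.support, x ≠ y → x ≠ z → ∀ t : Fin 7, x ≠ .w t := by
      intro x hx _ hxz
      exact H x (hsup x hx) (fun he => hans (he ▸ hx)) hxz
    have ihc := ih hq hH'
    have hlen : (SimpleGraph.Walk.cons h q).length = q.length + 1 := rfl
    rw [hlen]
    by_cases hyz : y = z
    · -- the endpoint is the neighbor
      subst hyz
      clear ihc hH'
      cases a with
      | w t => trivial
      | u i =>
        rcases adj_u h with ⟨occ, t0, hocc, rfl, ht0⟩ | ⟨t7, rfl, hcond⟩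
        · exact Or.inr (Or.inl ⟨occ, t0, rfl, by omega⟩)
        · exact Or.inr (Or.inr (Or.inr (Or.inl ⟨⟨t7, rfl⟩, h⟩)))
      | s occ t =>
        rcases adj_s h with ⟨rfl, ht⟩ | ⟨t2, rfl, ht2⟩ | ⟨rfl, ht⟩
        · exact Or.inr (Or.inl ⟨rfl, by omega⟩)
        · exact Or.inl ⟨t2, rfl, by omega⟩
        · exact Or.inr (Or.inr (Or.inl ⟨rfl, by omega⟩))
      | v j b =>
        rcases adj_v h with rfl | ⟨t7, rfl⟩ | ⟨occ, t', hocc, rfl, ht'⟩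
        · exact Or.inr (Or.inl ⟨rfl, by omega⟩)
        · exact Or.inr (Or.inr (Or.inl ⟨⟨t7, rfl⟩, h⟩))
        · exact Or.inr (Or.inr (Or.inr (Or.inl ⟨occ, t', hocc, rfl, by omega⟩)))
    · -- the neighbor is internal
      have h2 : 1 ≤ q.length := by
        rcases Nat.eq_zero_or_pos q.length with h0 | h0
        · exact absurd (SimpleGraph.Walk.eq_of_length_eq_zero h0) hyz
        · exact h0
      have hyw : ∀ t : Fin 7, y ≠ .w t :=
        H y (hsup y hyq) (fun he => h.ne he.symm) hyz
      cases a with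
      | w t => trivial
      | u i =>
        rcases adj_u h with ⟨occ, t0, hocc, rfl, ht0⟩ | ⟨t7, rfl, hcond⟩
        · subst hocc
          rcases ihc with ⟨t'', rfl, hd1, hd2⟩ | ⟨rfl, hd⟩ | ⟨rfl, hd⟩ | ⟨hmem, hne, hd⟩ |
            ⟨hmem, hne, hd⟩
          · exact Or.inr (Or.inl ⟨occ, t'', rfl, by omega⟩)
          · exact absurd rfl hza
          · exact Or.inr (Or.inr (Or.inl ⟨occ, rfl, rfl, by omega⟩))
          · exact absurd hmem hans
          · exact Or.inr (Or.inr (Or.inr (Or.inr (by omega))))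
        · exact absurd rfl (hyw t7)
      | s occ t =>
        rcases adj_s h with ⟨rfl, ht⟩ | ⟨t2, rfl, ht2⟩ | ⟨rfl, ht⟩
        · -- exited through u occ.1
          exact Or.inr (Or.inr (Or.inr (Or.inl ⟨hsup _ hyq, hyz, by omega⟩)))
        · -- moved within the chain
          rcases ihc with ⟨t'', rfl, hd1, hd2⟩ | ⟨rfl, hd⟩ | ⟨rfl, hd⟩ | ⟨hmem, hne, hd⟩ |
            ⟨hmem, hne, hd⟩
          · exact Or.inl ⟨t'', rfl, by omega⟩
          · exact Or.inr (Or.inl ⟨rfl, by omega⟩)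
          · exact Or.inr (Or.inr (Or.inl ⟨rfl, by omega⟩))
          · exact Or.inr (Or.inr (Or.inr (Or.inl ⟨hsup _ hmem, hne, by omega⟩)))
          · exact Or.inr (Or.inr (Or.inr (Or.inr ⟨hsup _ hmem, hne, by omega⟩)))
        · -- exited through vO occ
          exact Or.inr (Or.inr (Or.inr (Or.inr ⟨hsup _ hyq, hyz, by omega⟩)))
      | v j b =>
        rcases adj_v h with rfl | ⟨t7, rfl⟩ | ⟨occ, t', hocc, rfl, ht'⟩
        · -- through the partner
          rcases ihc with rfl | ⟨rfl, hd⟩ | ⟨⟨t7, rfl⟩, hadj⟩ | ⟨occ, t', hocc, rfl, hd⟩ |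
            ⟨occ, hocc, rfl, hd⟩ | ⟨hmem, hne, hd, hopts⟩ | hd
          · exact absurd rfl hyz
          · exact absurd (by simp : (VtxC.v j !!b : VtxC r φ) = .v j b) hza
          · exact Or.inr (Or.inr (Or.inr (Or.inr (Or.inr (Or.inl
              ⟨hsup _ hyq, hyz, by omega, Or.inl ⟨⟨t7, rfl⟩, hadj⟩⟩)))))
          · exact Or.inr (Or.inr (Or.inr (Or.inr (Or.inr (Or.inl
              ⟨hsup _ hyq, hyz, by omega, Or.inr (Or.inl ⟨occ, t', hocc, rfl⟩)⟩)))))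
          · exact Or.inr (Or.inr (Or.inr (Or.inr (Or.inr (Or.inl
              ⟨hsup _ hyq, hyz, by omega, Or.inr (Or.inr (Or.inl ⟨occ, hocc, rfl, by omega⟩))⟩)))))
          · exact absurd (by simpa using hmem) hans
          · exact Or.inr (Or.inr (Or.inr (Or.inr (Or.inr (Or.inl
              ⟨hsup _ hyq, hyz, by omega, Or.inr (Or.inr (Or.inr (by omega)))⟩)))))
        · exact absurd rfl (hyw t7)
        · -- into an own chain
          have hvo : vO occ = (.v j b : VtxC r φ) := by rw [vO, hocc]
          rcases ihc with ⟨t'', rfl, hd1, hd2⟩ | ⟨rfl, hd⟩ | ⟨rfl, hd⟩ | ⟨hmem, hne, hd⟩ |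
            ⟨hmem, hne, hd⟩
          · exact Or.inr (Or.inr (Or.inr (Or.inl ⟨occ, t'', hocc, rfl, by omega⟩)))
          · exact Or.inr (Or.inr (Or.inr (Or.inr (Or.inl ⟨occ, hocc, rfl, by omega⟩))))
          · exact absurd hvo hza
          · refine Or.inr (Or.inr (Or.inr (Or.inr (Or.inr (Or.inr (by omega))))))
          · exact absurd (hvo ▸ hmem) hans

end Master
section Final

open SimpleGraph.Walk

variable {r : ℕ} {φ : TC3SAT} {A : Fin φ.n → Bool}

lemma fin7a : ∀ t : Fin 7, t.1 ≤ 3 → t ∈ ({0,1,2,3} : Finset (Fin 7)) := by decide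
lemma fin7b : ∀ t : Fin 7, t.1 ≤ 4 → t ∈ ({0,1,2,3,4} : Finset (Fin 7)) := by decide
lemma fin7c : ∀ t : Fin 7, 1 ≤ t.1 → t.1 ≤ 3 → t ∈ ({1,2,3} : Finset (Fin 7)) := by decide
lemma fin7d : ∀ t : Fin 7, 4 ≤ t.1 → t.1 ≤ 6 → t ∈ ({4,5,6} : Finset (Fin 7)) := by decide

lemma olt_ne {a b : VtxC r φ} (h : olt (σA r φ A) a b) : a ≠ b := by
  intro he
  subst he
  rcases olt_iff.1 h with h | ⟨_, h | ⟨_, h⟩⟩ <;> omega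

lemma is_w_of_lev_ge {x : VtxC r φ} (h : 4 ≤ lev A x) : ∃ t, x = VtxC.w t := by
  cases x with
  | u i => simp [lev] at h
  | w t => exact ⟨t, rfl⟩
  | s occ t => simp [lev] at h
  | v j b =>
    exfalso
    by_cases hx : A j = b <;> simp [lev, hx] at h

/-- Predecessor extraction. -/
lemma pred_step {a z : VtxC r φ} (p : (GC r φ).Walk a z) (hne : z ≠ a) :
    ∃ y : VtxC r φ, (GC r φ).Adj z y ∧ y ∈ p.support := by
  have hnn : ¬ p.reverse.Nil := by
    rw [nil_iff_length_eq, SimpleGraph.Walk.length_reverse]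
    intro h0
    exact hne (SimpleGraph.Walk.eq_of_length_eq_zero h0).symm
  obtain ⟨y, hadj, q, hq⟩ := (SimpleGraph.Walk.not_nil_iff).1 hnn
  refine ⟨y, hadj, ?_⟩
  have : y ∈ p.reverse.support := by
    rw [hq, SimpleGraph.Walk.support_cons]
    exact List.mem_cons_of_mem _ q.start_mem_support
  rw [SimpleGraph.Walk.support_reverse, List.mem_reverse] at this
  exact this

/-- w-vertices for the clause vertex target. -/
def WuF (φ : TC3SAT) (i : Fin φ.m) : Finset (Fin 7) :=
  if (φ.clauses i).card = 2 then {0,1,2,3,4} else {0,1,2,3}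

def Wb (b : Bool) : Finset (Fin 7) := if b then {1,2,3} else {4,5,6}

lemma card_WuF (i : Fin φ.m) : (WuF φ i).card ≤ if (φ.clauses i).card = 2 then 5 else 4 := by
  rw [WuF]
  split <;> simp_all <;> decide

lemma card_Wb (b : Bool) : (Wb b).card ≤ 3 := by cases b <;> decide

lemma reach_bound (hr : 2 ≤ r) (hA : φ.Sat A) (a : VtxC r φ) :
    (reachSet (GC r φ) (σA r φ A) r a).ncard ≤ 6 := by
  cases a with
  | w t =>
    refine le_trans (Set.ncard_le_ncard (t := ((Finset.univ.erase t).image VtxC.w : Finset (VtxC r φ))) ?_ (Set.toFinite _)) ?_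
    · rintro z ⟨hlt, -⟩
      have hlev := olt_lev_le hlt
      have h4 : lev A (VtxC.w t : VtxC r φ) = 4 := rfl
      obtain ⟨t', rfl⟩ := is_w_of_lev_ge (A := A) (x := z) (by omega)
      have : t' ≠ t := by
        intro he
        exact olt_ne hlt (by rw [he])
      simp only [Finset.coe_image, Set.mem_image, Finset.mem_coe, Finset.mem_erase]
      exact ⟨t', ⟨this, Finset.mem_univ _⟩, rfl⟩
    · rw [Set.ncard_coe_finset]
      refine le_trans Finset.card_image_le ?_
      rw [Finset.card_erase_of_mem (Finset.mem_univ _)]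
      simp
  | u i =>
    classical
    refine le_trans (Set.ncard_le_ncard
      (t := (((WuF φ i).image VtxC.w ∪
        ((φ.clauses i).filter (fun l => ¬ (A l.1 = l.2))).image (fun l => VtxC.v l.1 l.2) :
          Finset (VtxC r φ))) ) ?_ (Set.toFinite _)) ?_
    · rintro z ⟨hlt, p, hpath, hplen, hint⟩
      have hlev := olt_lev_le hlt
      have h2 : lev A (VtxC.u i : VtxC r φ) = 2 := rfl
      have H : ∀ x ∈ p.support, x ≠ VtxC.u i → x ≠ z → ∀ t : Fin 7, x ≠ VtxC.w t := by
        intro x hx hxa hxz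
        exact not_w_of_olt (by rw [h2]; omega) (hint x hx hxa hxz)
      have conc := master p hpath H
      rw [Finset.coe_union, Set.mem_union]
      rcases conc with rfl | ⟨occ, t', rfl, hd⟩ | ⟨occ, hocc, rfl, hd⟩ | ⟨⟨t7, rfl⟩, hadj⟩ | hd
      · exact absurd rfl (olt_ne hlt)
      · exfalso
        have : lev A (VtxC.s occ t' : VtxC r φ) = 0 := rfl
        omega
      · right
        subst hocc
        have hflev : lev A (vO occ : VtxC r φ) = if A occ.2.1.1 = occ.2.1.2 then 1 else 3 := rfl
        have hfalse : ¬ (A occ.2.1.1 = occ.2.1.2) := by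
          intro hT
          rw [hT] at hflev
          simp at hflev
          omega
        simp only [Finset.coe_image, Set.mem_image, Finset.mem_coe, Finset.mem_filter]
        exact ⟨occ.2.1, ⟨occ.2.2, hfalse⟩, rfl⟩
      · left
        rcases adj_u_w hadj with hc | ⟨hc, hcard⟩
        · simp only [Finset.coe_image, Set.mem_image, Finset.mem_coe]
          refine ⟨t7, ?_, rfl⟩
          rw [WuF]
          split
          · exact fin7b t7 (by omega)
          · exact fin7a t7 hc
        · simp only [Finset.coe_image, Set.mem_image, Finset.mem_coe]
          refine ⟨t7, ?_, rfl⟩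
          rw [WuF, if_pos hcard]
          exact fin7b t7 (by omega)
      · omega
    · rw [Set.ncard_coe_finset]
      refine le_trans (Finset.card_union_le _ _) ?_
      have h1 : ((WuF φ i).image (VtxC.w : Fin 7 → VtxC r φ)).card ≤
          if (φ.clauses i).card = 2 then 5 else 4 :=
        le_trans Finset.card_image_le (card_WuF i)
      have hge := φ.clause_ge_two i
      have hle := φ.clause_le_three i
      obtain ⟨l₀, hl₀, hl₀A⟩ := hA i
      have h2 : (((φ.clauses i).filter (fun l => ¬ (A l.1 = l.2))).image
          (fun l => (VtxC.v l.1 l.2 : VtxC r φ))).card ≤ (φ.clauses i).card - 1 := by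
        refine le_trans Finset.card_image_le ?_
        have hsub : ((φ.clauses i).filter (fun l => ¬ (A l.1 = l.2))) ⊆ (φ.clauses i).erase l₀ := by
          rw [Finset.subset_erase]
          constructor
          · exact Finset.filter_subset _ _
          · intro hmem
            exact (Finset.mem_filter.1 hmem).2 hl₀A
        refine le_trans (Finset.card_le_card hsub) ?_
        rw [Finset.card_erase_of_mem hl₀]
      by_cases hc : (φ.clauses i).card = 2
      · rw [if_pos hc] at h1
        omega
      · rw [if_neg hc] at h1
        omega
  | v j b =>
    classical
    by_cases hAb : A j = b
    · -- satisfied literal vertex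
      refine le_trans (Set.ncard_le_ncard
        (t := ((insert (VtxC.v j !b) ((Wb b).image VtxC.w ∪
          (Finset.univ.filter (fun i => (j, b) ∈ φ.clauses i)).image VtxC.u)) :
            Finset (VtxC r φ))) ?_ (Set.toFinite _)) ?_
      · rintro z ⟨hlt, p, hpath, hplen, hint⟩
        have h1 : lev A (VtxC.v j b : VtxC r φ) = 1 := by simp [lev, hAb]
        have hlev := olt_lev_le hlt
        have H : ∀ x ∈ p.support, x ≠ VtxC.v j b → x ≠ z → ∀ t : Fin 7, x ≠ VtxC.w t := by
          intro x hx hxa hxz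
          exact not_w_of_olt (by rw [h1]; omega) (hint x hx hxa hxz)
        have conc := master p hpath H
        simp only [Finset.coe_insert, Set.mem_insert_iff, Finset.coe_union, Set.mem_union,
          Finset.coe_image, Set.mem_image, Finset.mem_coe, Finset.mem_filter]
        rcases conc with rfl | ⟨rfl, hd⟩ | ⟨⟨t7, rfl⟩, hadj⟩ | ⟨occ, t', hocc, rfl, hd⟩ |
          ⟨occ, hocc, rfl, hd⟩ | ⟨hmem, hne, hd, hopts⟩ | hd
        · exact absurd rfl (olt_ne hlt)
        · exact Or.inl rfl
        · refine Or.inr (Or.inl ⟨t7, ?_, rfl⟩)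
          rcases adj_v_w hadj with ⟨rfl, hc1, hc2⟩ | ⟨rfl, hc1, hc2⟩
          · rw [Wb]; exact fin7c t7 hc1 hc2
          · rw [Wb]; exact fin7d t7 hc1 hc2
        · exfalso
          have : lev A (VtxC.s occ t' : VtxC r φ) = 0 := rfl
          omega
        · refine Or.inr (Or.inr ⟨occ.1, ⟨Finset.mem_univ _, ?_⟩, rfl⟩)
          have := occ.2.2
          rwa [hocc] at this
        · exfalso
          have hpne : (VtxC.v j !b : VtxC r φ) ≠ VtxC.v j b := by simp
          have holt := hint _ hmem hpne hne
          have := olt_lev_le holt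
          have h3 : lev A (VtxC.v j !b : VtxC r φ) = 3 := by
            simp [lev, hAb]
          omega
        · omega
      · rw [Set.ncard_coe_finset]
        refine le_trans (Finset.card_insert_le _ _) ?_
        have := Finset.card_union_le ((Wb b).image (VtxC.w : Fin 7 → VtxC r φ))
          ((Finset.univ.filter (fun i => (j, b) ∈ φ.clauses i)).image
            (VtxC.u : Fin φ.m → VtxC r φ))
        have h1 : ((Wb b).image (VtxC.w : Fin 7 → VtxC r φ)).card ≤ 3 :=
          le_trans Finset.card_image_le (card_Wb b)
        have h2 : ((Finset.univ.filter (fun i => (j, b) ∈ φ.clauses i)).image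
            (VtxC.u : Fin φ.m → VtxC r φ)).card ≤ 2 := by
          refine le_trans Finset.card_image_le ?_
          rw [φ.lit_twice (j, b)]
        omega
    · -- unsatisfied literal vertex
      refine le_trans (Set.ncard_le_ncard
        (t := (((Wb b).image VtxC.w ∪ (Wb !b).image VtxC.w) : Finset (VtxC r φ))) ?_
        (Set.toFinite _)) ?_
      · rintro z ⟨hlt, p, hpath, hplen, hint⟩
        have h1 : lev A (VtxC.v j b : VtxC r φ) = 3 := by simp [lev, hAb]
        have hlev := olt_lev_le hlt
        have H : ∀ x ∈ p.support, x ≠ VtxC.v j b → x ≠ z → ∀ t : Fin 7, x ≠ VtxC.w t := by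
          intro x hx hxa hxz
          exact not_w_of_olt (le_of_eq h1) (hint x hx hxa hxz)
        have conc := master p hpath H
        simp only [Finset.coe_union, Set.mem_union, Finset.coe_image, Set.mem_image,
          Finset.mem_coe]
        have hAnb : A j = !b := by cases b <;> simp_all
        rcases conc with rfl | ⟨rfl, hd⟩ | ⟨⟨t7, rfl⟩, hadj⟩ | ⟨occ, t', hocc, rfl, hd⟩ |
          ⟨occ, hocc, rfl, hd⟩ | ⟨hmem, hne, hd, hopts⟩ | hd
        · exact absurd rfl (olt_ne hlt)
        · exfalso
          have h3 : lev A (VtxC.v j !b : VtxC r φ) = 1 := by simp [lev, hAnb]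
          omega
        · refine Or.inl ⟨t7, ?_, rfl⟩
          rcases adj_v_w hadj with ⟨rfl, hc1, hc2⟩ | ⟨rfl, hc1, hc2⟩
          · rw [Wb]; exact fin7c t7 hc1 hc2
          · rw [Wb]; exact fin7d t7 hc1 hc2
        · exfalso
          have : lev A (VtxC.s occ t' : VtxC r φ) = 0 := rfl
          omega
        · exfalso
          have : lev A (VtxC.u occ.1 : VtxC r φ) = 2 := rfl
          omega
        · rcases hopts with ⟨⟨t7, rfl⟩, hadj⟩ | ⟨occ, t', hocc, rfl⟩ | ⟨occ, hocc, rfl, hd2⟩ | hd2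
          · refine Or.inr ⟨t7, ?_, rfl⟩
            rcases adj_v_w hadj with ⟨hb, hc1, hc2⟩ | ⟨hb, hc1, hc2⟩
            · rw [hb, Wb]; exact fin7c t7 hc1 hc2
            · rw [hb, Wb]; exact fin7d t7 hc1 hc2
          · exfalso
            have hlev2 : lev A (VtxC.s occ t' : VtxC r φ) = 0 := rfl
            omega
          · omega
          · omega
        · omega
      · rw [Set.ncard_coe_finset]
        refine le_trans (Finset.card_union_le _ _) ?_
        have h1 : ((Wb b).image (VtxC.w : Fin 7 → VtxC r φ)).card ≤ 3 :=
          le_trans Finset.card_image_le (card_Wb b)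
        have h2 : ((Wb !b).image (VtxC.w : Fin 7 → VtxC r φ)).card ≤ 3 :=
          le_trans Finset.card_image_le (card_Wb !b)
        omega
  | s occ t =>
    classical
    refine le_trans (Set.ncard_le_ncard
      (t := (({VtxC.u occ.1, vO occ,
        if h : t.1 + 1 < r - 1 then VtxC.s occ ⟨t.1 + 1, h⟩ else VtxC.u occ.1}) :
          Finset (VtxC r φ))) ?_ (Set.toFinite _)) ?_
    · rintro z ⟨hlt, p, hpath, hplen, hint⟩
      have h0 : lev A (VtxC.s occ t : VtxC r φ) = 0 := rfl
      have hlev := olt_lev_le hlt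
      have H : ∀ x ∈ p.support, x ≠ VtxC.s occ t → x ≠ z → ∀ t : Fin 7, x ≠ VtxC.w t := by
        intro x hx hxa hxz
        exact not_w_of_olt (by rw [h0]; omega) (hint x hx hxa hxz)
      have conc := master p hpath H
      simp only [Finset.coe_insert, Set.mem_insert_iff, Finset.coe_singleton,
        Set.mem_singleton_iff]
      rcases conc with ⟨t', rfl, hd1, hd2⟩ | ⟨rfl, hd⟩ | ⟨rfl, hd⟩ | ⟨hmem, hne, hd⟩ |
        ⟨hmem, hne, hd⟩
      · -- same-chain endpoint: must be the immediate successor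
        right; right
        have htt' : t.1 < t'.1 := olt_s_s hlt
        have ht'1 : t'.1 = t.1 + 1 := by
          obtain ⟨y, hadj, hymem⟩ := pred_step p (fun he => olt_ne hlt he.symm)
          by_cases hya : y = VtxC.s occ t
          · subst hya
            rcases adj_s hadj with ⟨hy, -⟩ | ⟨t2, hy, hc⟩ | ⟨hy, -⟩
            · exact absurd hy (by simp)
            · have : t2 = t := by
                have := hy
                simp only [VtxC.s.injEq] at this
                exact this.2.symm
              subst this
              omega
            · exact absurd hy (by simp [vO])
          · have hyz : y ≠ VtxC.s occ t' := fun he => hadj.ne he.symm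
            have holt := hint y hymem hya hyz
            have hylev := olt_lev_le holt
            rw [h0] at hylev
            obtain ⟨occ2, k, rfl⟩ := lev_eq_zero (Nat.le_zero.1 hylev)
            rcases adj_s hadj with ⟨hy, -⟩ | ⟨t2, hy, hc⟩ | ⟨hy, -⟩
            · exact absurd hy (by simp)
            · exfalso
              simp only [VtxC.s.injEq] at hy
              obtain ⟨rfl, rfl⟩ := hy
              have hkt := olt_s_s holt
              omega
            · exfalso
              rw [vO] at hy
              exact absurd hy (by simp)
        rw [dif_pos (by omega : t.1 + 1 < r - 1)]
        congr 1
        exact Fin.ext ht'1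
      · exact Or.inl rfl
      · exact Or.inr (Or.inl rfl)
      · exfalso
        have hune : (VtxC.u occ.1 : VtxC r φ) ≠ VtxC.s occ t := by simp
        have holt := hint _ hmem hune hne
        have := olt_lev_le holt
        have : lev A (VtxC.u occ.1 : VtxC r φ) = 2 := rfl
        omega
      · exfalso
        have hvne : vO occ ≠ (VtxC.s occ t : VtxC r φ) := by rw [vO]; simp
        have holt := hint _ hmem hvne hne
        have hl := olt_lev_le holt
        have : 1 ≤ lev A (vO occ : VtxC r φ) := by
          rw [vO]
          simp only [lev]
          split <;> omega
        omega
    · rw [Set.ncard_coe_finset]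
      have h1 := Finset.card_insert_le (VtxC.u occ.1 : VtxC r φ)
        {vO occ, if h : t.1 + 1 < r - 1 then VtxC.s occ ⟨t.1 + 1, h⟩ else VtxC.u occ.1}
      have h2 := Finset.card_insert_le (vO occ : VtxC r φ)
        ({if h : t.1 + 1 < r - 1 then VtxC.s occ ⟨t.1 + 1, h⟩ else VtxC.u occ.1} :
          Finset (VtxC r φ))
      have h3 : ({if h : t.1 + 1 < r - 1 then VtxC.s occ ⟨t.1 + 1, h⟩ else VtxC.u occ.1} :
          Finset (VtxC r φ)).card = 1 := Finset.card_singleton _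
      omega

end Final
/-- If the 2-Clause 3-SAT instance `φ` is satisfiable, then (for `r ≥ 2`) the reduction
graph `G(φ)` has `r`-coloring number at most 6. -/
theorem sat_implies_colr_le_six (r : ℕ) (hr : 2 ≤ r) (φ : TC3SAT) (hsat : φ.Satisfiable) :
    colNum (GC r φ) r ≤ 6 := by
  obtain ⟨A, hA⟩ := hsat
  have hσ : colOrd (GC r φ) (σA r φ A) r ≤ 6 :=
    Finset.sup_le fun a _ => reach_bound hr hA a
  exact le_trans (ciInf_le (OrderBot.bddBelow _) _) hσ
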